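/- Let T be a k-linear triangulated category with a Serre functor S, and let A ⊆ T be an admissible full triangulated subcategory. Then S maps ^⊥A onto A^⊥ and S^{−1} maps A^⊥ onto ^⊥A, i.e. the essential image of ^⊥A under S equals A^⊥ and the essential image of A^⊥ under S^{−1} equals ^⊥A. In particular, if T = ⟨A, B⟩ is a semiorthogonal decomposition, then B = ^⊥A, A = B^⊥, and there are semiorthogonal decompositions T = ⟨S(B), A⟩ and T = ⟨B, S^{−1}(A)⟩, where S(B) and S^{−1}(A) denote essential images. -/

import Mathlib

namespace HPD

open CategoryTheory Category Limits Pretriangulated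

universe w v u

variable {C : Type u} [Category.{v} C]

/-- The "essential image" of a set of objects under an assignment `Φ` on objects. -/
def essImageSet (Φ : C → C) (S : Set C) : Set C :=
  {Y : C | ∃ X ∈ S, Nonempty (Φ X ≅ Y)}

/-- The image of a set of objects under a functor to a full subcategory, regarded as a
set of objects of the ambient category (closed under isomorphism). -/
def projImageSet {Z : C → Prop} (π : C ⥤ ObjectProperty.FullSubcategory Z) (S : Set C) : Set C :=
  essImageSet (fun X : C => (π.obj X).obj) S

section Preadd

variable [Preadditive C]

/-- `HomOrth B A` : every morphism from an object of `B` to an object of `A` vanishes. -/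
def HomOrth (B A : Set C) : Prop :=
  ∀ ⦃X : C⦄, X ∈ B → ∀ ⦃Y : C⦄, Y ∈ A → ∀ f : X ⟶ Y, f = 0

/-- The right orthogonal `A^⊥` of a set of objects `A`. -/
def rightOrth (A : Set C) : Set C :=
  {Y : C | ∀ ⦃X : C⦄, X ∈ A → ∀ f : X ⟶ Y, f = 0}

/-- The left orthogonal `^⊥A` of a set of objects `A`. -/
def leftOrth (A : Set C) : Set C :=
  {X : C | ∀ ⦃Y : C⦄, Y ∈ A → ∀ f : X ⟶ Y, f = 0}

/-- A subcategory (set of objects) is admissible if the inclusion of the corresponding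
full subcategory admits both a left and a right adjoint. -/
def IsAdmissibleSub (A : Set C) : Prop :=
  (ObjectProperty.ι (C := C) (· ∈ A)).IsRightAdjoint ∧
    (ObjectProperty.ι (C := C) (· ∈ A)).IsLeftAdjoint

/-- `L : C ⥤ C` is a left mutation functor through `B`, i.e. it is (isomorphic to)
the composition `i_{B^⊥} ∘ i_{B^⊥}^*` of the left adjoint of the inclusion of the right
orthogonal of `B` with this inclusion. -/
def IsLeftMutation (B : Set C) (L : C ⥤ C) : Prop :=
  ∃ p : C ⥤ ObjectProperty.FullSubcategory (C := C) (· ∈ rightOrth B),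
    Nonempty (p ⊣ ObjectProperty.ι (C := C) (· ∈ rightOrth B)) ∧
      Nonempty (L ≅ p ⋙ ObjectProperty.ι (C := C) (· ∈ rightOrth B))

end Preadd

section Triang

variable [HasZeroObject C] [Preadditive C] [HasShift C ℤ]
  [∀ n : ℤ, (shiftFunctor C n).Additive] [Pretriangulated C]

/-- A full triangulated subcategory, recorded as its (isomorphism-closed) set of objects. -/
structure IsTriangSub (A : Set C) : Prop where
  zero_mem : ∀ ⦃Z : C⦄, IsZero Z → Z ∈ A
  iso_mem : ∀ ⦃X Y : C⦄, (X ≅ Y) → X ∈ A → Y ∈ A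
  shift_mem : ∀ ⦃X : C⦄ (n : ℤ), X ∈ A → (X⟦n⟧ : C) ∈ A
  cone_mem : ∀ T : Triangle C, (T ∈ distTriang C) → T.obj₁ ∈ A → T.obj₂ ∈ A → T.obj₃ ∈ A

/-- A full triangulated subcategory is admissible if it moreover has the two adjoints. -/
def IsAdmissible (A : Set C) : Prop :=
  IsTriangSub A ∧ IsAdmissibleSub A

/-- The smallest full triangulated subcategory containing a given set of objects. -/
def generated (S : Set C) : Set C :=
  ⋂₀ {P : Set C | IsTriangSub P ∧ S ⊆ P}

/-- A semiorthogonal sequence of subcategories: no nonzero morphisms from later to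
earlier ones. -/
def Semiorthogonal {n : ℕ} (A : Fin n → Set C) : Prop :=
  ∀ ⦃l k : Fin n⦄, l < k → HomOrth (A k) (A l)

/-- `t` admits a filtration `0 = t_n → t_{n-1} → ⋯ → t_0 = t` whose successive cones lie
in the prescribed subcategories. -/
def HasFiltration {n : ℕ} (A : Fin n → Set C) (t : C) : Prop :=
  ∃ (F : Fin (n + 1) → C) (f : ∀ j : Fin n, F j.succ ⟶ F j.castSucc),
    IsZero (F (Fin.last n)) ∧ F 0 = t ∧
      ∀ j : Fin n, ∃ (a : C) (g : F j.castSucc ⟶ a) (h : a ⟶ (F j.succ)⟦(1 : ℤ)⟧),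
        (Triangle.mk (f j) g h ∈ distTriang C) ∧ a ∈ A j

/-- A semiorthogonal decomposition of (the bounded derived category) `C`. -/
structure IsSOD {n : ℕ} (A : Fin n → Set C) : Prop where
  triangSub : ∀ j, IsTriangSub (A j)
  semiorth : Semiorthogonal A
  filt : ∀ t : C, HasFiltration A t

/-- A semiorthogonal decomposition of a full triangulated subcategory `D` of `C`. -/
structure IsSODWithin (D : Set C) {n : ℕ} (A : Fin n → Set C) : Prop where
  subset : ∀ j, A j ⊆ D
  triangSub : ∀ j, IsTriangSub (A j)
  semiorth : Semiorthogonal A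
  filt : ∀ t ∈ D, HasFiltration A t

/-- The `n`-th power of an autoequivalence, applied to an object. -/
def twistFun (τ : C ≌ C) : ℤ → C → C
  | Int.ofNat m => (fun X : C => τ.functor.obj X)^[m]
  | Int.negSucc m => (fun X : C => τ.inverse.obj X)^[m + 1]

/-- The twist `S(n) = τⁿ(S)` of a set of objects (as an essential image). -/
def twistSet (τ : C ≌ C) (n : ℤ) (S : Set C) : Set C :=
  essImageSet (twistFun τ n) S

/-- A Lefschetz decomposition of `C` of length `i` with respect to the autoequivalence `τ`:
`C = ⟨A 0, (A 1)(1), …, (A (i-1))(i-1)⟩` with `A 0 ⊇ A 1 ⊇ ⋯ ⊇ A (i-1)` admissible. -/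
structure IsLefschetz (τ : C ≌ C) (i : ℕ) (A : ℕ → Set C) : Prop where
  pos : 0 < i
  desc : ∀ m : ℕ, m + 1 < i → A (m + 1) ⊆ A m
  adm : ∀ m : ℕ, m < i → IsAdmissible (A m)
  sod : IsSOD (fun j : Fin i => twistSet τ ((j : ℕ) : ℤ) (A (j : ℕ)))

/-- The primitive component `𝔞_k`, the right orthogonal of `A (k+1)` inside `A k`. -/
def primComp (A : ℕ → Set C) (m : ℕ) : Set C :=
  A m ∩ rightOrth (A (m + 1))

/-- Composition of a finite family of endofunctors: `compFam L = L 0 ∘ L 1 ∘ ⋯ ∘ L (m-1)`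
(so `L (m-1)` is applied first). -/
def compFam : ∀ {m : ℕ}, (Fin m → (C ⥤ C)) → (C ⥤ C)
  | 0, _ => 𝟭 C
  | _ + 1, L => compFam (fun j => L j.succ) ⋙ L 0

end Triang

section Serre

/-- A Serre functor on the `k`-linear triangulated category `C`: a `k`-linear exact
autoequivalence `S` together with pairings exhibiting `Hom(X, Y) ≅ Hom(Y, S X)^*`
naturally in both variables. -/
structure SerreData (k : Type w) [Field k] (C : Type u) [Category.{v} C] [Preadditive C]
    [CategoryTheory.Linear k C] [HasZeroObject C] [HasShift C ℤ]
    [∀ n : ℤ, (shiftFunctor C n).Additive] [Pretriangulated C] where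
  S : C ≌ C
  additive : S.functor.Additive
  linear : letI := additive; S.functor.Linear k
  commShift : S.functor.CommShift ℤ
  triangulated : letI := commShift; S.functor.IsTriangulated
  pairing : ∀ X Y : C, (X ⟶ Y) →ₗ[k] Module.Dual k (Y ⟶ S.functor.obj X)
  pairing_bijective : ∀ X Y : C, Function.Bijective (pairing X Y)
  pairing_nat_left : ∀ ⦃X' X Y : C⦄ (a : X' ⟶ X) (φ : X ⟶ Y) (ψ : Y ⟶ S.functor.obj X'),
    pairing X' Y (a ≫ φ) ψ = pairing X Y φ (ψ ≫ S.functor.map a)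
  pairing_nat_right : ∀ ⦃X Y Y' : C⦄ (b : Y ⟶ Y') (φ : X ⟶ Y) (ψ : Y' ⟶ S.functor.obj X),
    pairing X Y' (φ ≫ b) ψ = pairing X Y φ (b ≫ ψ)

end Serre


section Auxiliary

open ZeroObject

variable [HasZeroObject C] [Preadditive C] [HasShift C ℤ]
  [∀ n : ℤ, (shiftFunctor C n).Additive] [Pretriangulated C]

lemma rightOrth_iso_mem {A : Set C} {X Y : C} (e : X ≅ Y) (hX : X ∈ rightOrth A) :
    Y ∈ rightOrth A := by
  intro a ha f
  have h : f ≫ e.inv = 0 := hX ha (f ≫ e.inv)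
  have : (f ≫ e.inv) ≫ e.hom = f := by simp
  rw [← this, h, zero_comp]

lemma leftOrth_iso_mem {A : Set C} {X Y : C} (e : X ≅ Y) (hX : X ∈ leftOrth A) :
    Y ∈ leftOrth A := by
  intro a ha f
  have h : e.hom ≫ f = 0 := hX ha (e.hom ≫ f)
  have : e.inv ≫ e.hom ≫ f = f := by simp
  rw [← this, h, comp_zero]

lemma triangSub_rightOrth {A : Set C} (hA : IsTriangSub A) :
    IsTriangSub (rightOrth A) := by
  have hshift : ∀ ⦃X : C⦄ (n : ℤ), X ∈ rightOrth A → (X⟦n⟧ : C) ∈ rightOrth A := by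
    intro X n hX a ha f
    have h0 : (shiftFunctor C (-n)).map f ≫
        ((shiftFunctorCompIsoId C n (-n) (by omega)).hom.app X) = 0 :=
      hX (hA.shift_mem (-n) ha) _
    have h1 : (shiftFunctor C (-n)).map f = 0 := by
      rw [← cancel_mono ((shiftFunctorCompIsoId C n (-n) (by omega)).hom.app X), zero_comp]
      exact h0
    apply (shiftFunctor C (-n)).map_injective
    rw [h1, Functor.map_zero]
  refine ⟨?_, ?_, hshift, ?_⟩
  · intro Z hZ a _ f
    exact hZ.eq_zero_of_tgt f
  · intro X Y e hX
    exact rightOrth_iso_mem e hX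
  · intro T hT h1 h2 a ha u
    have h3 : u ≫ T.mor₃ = 0 := hshift 1 h1 ha (u ≫ T.mor₃)
    obtain ⟨v, hv⟩ := Triangle.coyoneda_exact₃ T hT u h3
    rw [hv, h2 ha v, zero_comp]

lemma triangSub_leftOrth {A : Set C} (hA : IsTriangSub A) :
    IsTriangSub (leftOrth A) := by
  have hshift : ∀ ⦃X : C⦄ (n : ℤ), X ∈ leftOrth A → (X⟦n⟧ : C) ∈ leftOrth A := by
    intro X n hX a ha f
    have h0 : ((shiftFunctorCompIsoId C n (-n) (by omega)).inv.app X) ≫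
        (shiftFunctor C (-n)).map f = 0 :=
      hX (hA.shift_mem (-n) ha) _
    have h1 : (shiftFunctor C (-n)).map f = 0 := by
      rw [← cancel_epi ((shiftFunctorCompIsoId C n (-n) (by omega)).inv.app X), comp_zero]
      exact h0
    apply (shiftFunctor C (-n)).map_injective
    rw [h1, Functor.map_zero]
  refine ⟨?_, ?_, hshift, ?_⟩
  · intro Z hZ a _ f
    exact hZ.eq_zero_of_src f
  · intro X Y e hX
    exact leftOrth_iso_mem e hX
  · intro T hT h1 h2 a ha u
    -- u : T.obj₃ ⟶ a ; use rotation
    have h3 : T.mor₂ ≫ u = 0 := h2 ha (T.mor₂ ≫ u)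
    obtain ⟨v, hv⟩ := Triangle.yoneda_exact₃ T hT u h3
    rw [hv, hshift 1 h1 ha v, comp_zero]

/-- Injectivity of postcomposition passes through the shift. -/
lemma postcomp_shift_injective {X Y : C} (ε : X ⟶ Y) {c : C}
    (h : Function.Injective (fun p : (c⟦(-1 : ℤ)⟧) ⟶ X => p ≫ ε)) :
    Function.Injective (fun p : c ⟶ (X⟦(1 : ℤ)⟧) => p ≫ (shiftFunctor C (1 : ℤ)).map ε) := by
  intro p p' hpp
  have hpp' : p ≫ (shiftFunctor C (1 : ℤ)).map ε = p' ≫ (shiftFunctor C (1 : ℤ)).map ε := hpp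
  have e : (shiftFunctor C (-1 : ℤ) ⋙ shiftFunctor C (1 : ℤ)).obj c ≅ c :=
    (shiftFunctorCompIsoId C (-1 : ℤ) (1 : ℤ) (by omega)).app c
  have h1 : (shiftFunctor C (1 : ℤ)).preimage (e.hom ≫ p) ≫ ε
      = (shiftFunctor C (1 : ℤ)).preimage (e.hom ≫ p') ≫ ε := by
    apply (shiftFunctor C (1 : ℤ)).map_injective
    rw [Functor.map_comp, Functor.map_comp, Functor.map_preimage, Functor.map_preimage,
      assoc, assoc, hpp']
  have h2 := h h1
  have h3 := congrArg (shiftFunctor C (1 : ℤ)).map h2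
  rw [Functor.map_preimage, Functor.map_preimage] at h3
  exact (cancel_epi e.hom).1 h3

/-- Surjectivity of precomposition passes through the shift. -/
lemma precomp_shift_surjective {X Y : C} (u : X ⟶ Y) {c : C}
    (h : Function.Surjective (fun p : Y ⟶ (c⟦(-1 : ℤ)⟧) => u ≫ p)) :
    Function.Surjective (fun p : (Y⟦(1 : ℤ)⟧) ⟶ c => (shiftFunctor C (1 : ℤ)).map u ≫ p) := by
  intro r
  have e : (shiftFunctor C (-1 : ℤ) ⋙ shiftFunctor C (1 : ℤ)).obj c ≅ c :=
    (shiftFunctorCompIsoId C (-1 : ℤ) (1 : ℤ) (by omega)).app c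
  obtain ⟨q₀, hq₀⟩ := h ((shiftFunctor C (1 : ℤ)).preimage (r ≫ e.inv))
  have hq₀' : u ≫ q₀ = (shiftFunctor C (1 : ℤ)).preimage (r ≫ e.inv) := hq₀
  refine ⟨(shiftFunctor C (1 : ℤ)).map q₀ ≫ e.hom, ?_⟩
  show (shiftFunctor C (1 : ℤ)).map u ≫ (shiftFunctor C (1 : ℤ)).map q₀ ≫ e.hom = r
  rw [← assoc, ← Functor.map_comp, hq₀', Functor.map_preimage, assoc, e.inv_hom_id, comp_id]

/-- If postcomposition with `u : x ⟶ t` is bijective on morphisms from objects of `A`,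
then the cone of `u` is in the right orthogonal of `A`. -/
lemma cone_mem_rightOrth {A : Set C} (hA : IsTriangSub A) {x t z : C}
    (u : x ⟶ t) (v : t ⟶ z) (w : z ⟶ x⟦(1 : ℤ)⟧)
    (hd : Triangle.mk u v w ∈ distTriang C)
    (hbij : ∀ ⦃c : C⦄, c ∈ A → Function.Bijective (fun φ : c ⟶ x => φ ≫ u)) :
    z ∈ rightOrth A := by
  intro c hc φ
  have z31 : w ≫ (shiftFunctor C (1 : ℤ)).map u = 0 := comp_distTriang_mor_zero₃₁ _ hd
  have z12 : u ≫ v = 0 := comp_distTriang_mor_zero₁₂ _ hd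
  have h2 : φ ≫ w = 0 :=
    (postcomp_shift_injective u (hbij (hA.shift_mem (-1) hc)).1)
      (show (φ ≫ w) ≫ (shiftFunctor C (1 : ℤ)).map u
          = (0 : c ⟶ (x⟦(1 : ℤ)⟧)) ≫ (shiftFunctor C (1 : ℤ)).map u by
        rw [zero_comp, assoc, z31, comp_zero])
  obtain ⟨v', hv'⟩ := Triangle.coyoneda_exact₃ _ hd φ h2
  have hv'' : φ = v' ≫ v := hv'
  obtain ⟨φ₁, hφ₁⟩ := (hbij hc).2 v'
  have hφ₁' : φ₁ ≫ u = v' := hφ₁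
  rw [hv'', ← hφ₁']; exact (assoc φ₁ u v).trans (by rw [z12, comp_zero])

/-- If precomposition with `u : x ⟶ t` is bijective on morphisms to objects of `A`,
then the cone of `u` is in the left orthogonal of `A`. -/
lemma cone_mem_leftOrth {A : Set C} (hA : IsTriangSub A) {x t z : C}
    (u : x ⟶ t) (v : t ⟶ z) (w : z ⟶ x⟦(1 : ℤ)⟧)
    (hd : Triangle.mk u v w ∈ distTriang C)
    (hbij : ∀ ⦃c : C⦄, c ∈ A → Function.Bijective (fun φ : t ⟶ c => u ≫ φ)) :
    z ∈ leftOrth A := by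
  intro c hc φ
  have z31 : w ≫ (shiftFunctor C (1 : ℤ)).map u = 0 := comp_distTriang_mor_zero₃₁ _ hd
  have z12 : u ≫ v = 0 := comp_distTriang_mor_zero₁₂ _ hd
  have h2 : v ≫ φ = 0 :=
    (hbij hc).1 (show u ≫ (v ≫ φ) = u ≫ (0 : t ⟶ c) by
      rw [comp_zero, ← assoc, z12, zero_comp])
  obtain ⟨ψ, hψ⟩ := Triangle.yoneda_exact₃ _ hd φ h2
  have hψ₂ : φ = w ≫ ψ := hψ
  have hs : Function.Surjective
      (fun p : (t⟦(1 : ℤ)⟧) ⟶ c => (shiftFunctor C (1 : ℤ)).map u ≫ p) :=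
    precomp_shift_surjective u (hbij (hA.shift_mem (-1) hc)).2
  obtain ⟨ψ', hψ'⟩ := hs ψ
  have hψ'' : (shiftFunctor C (1 : ℤ)).map u ≫ ψ' = ψ := hψ'
  rw [hψ₂, ← hψ'', ← assoc, z31, zero_comp]

/-- If the fiber of `v : t ⟶ z` corecieves bijectively, the fiber is in the left orthogonal. -/
lemma fiber_mem_leftOrth {A : Set C} (hA : IsTriangSub A) {x t z : C}
    (u : x ⟶ t) (v : t ⟶ z) (w : z ⟶ x⟦(1 : ℤ)⟧)
    (hd : Triangle.mk u v w ∈ distTriang C)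
    (hbij : ∀ ⦃c : C⦄, c ∈ A → Function.Bijective (fun φ : z ⟶ c => v ≫ φ)) :
    x ∈ leftOrth A := by
  intro c hc φ
  have z23 : v ≫ w = 0 := comp_distTriang_mor_zero₂₃ _ hd
  have z12 : u ≫ v = 0 := comp_distTriang_mor_zero₁₂ _ hd
  have h2 : w ≫ (shiftFunctor C (1 : ℤ)).map φ = 0 :=
    (hbij (hA.shift_mem 1 hc)).1
      (show v ≫ (w ≫ (shiftFunctor C (1 : ℤ)).map φ)
          = v ≫ (0 : z ⟶ (c⟦(1 : ℤ)⟧)) by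
        rw [comp_zero, ← assoc, z23, zero_comp])
  obtain ⟨g, hg⟩ := Triangle.yoneda_exact₃ _ (rot_of_distTriang _ hd)
    ((shiftFunctor C (1 : ℤ)).map φ) h2
  obtain ⟨g₁, hg₁⟩ := (hbij hc).2 ((shiftFunctor C (1 : ℤ)).preimage g)
  have hg₁' : v ≫ g₁ = (shiftFunctor C (1 : ℤ)).preimage g := hg₁
  apply (shiftFunctor C (1 : ℤ)).map_injective
  rw [Functor.map_zero]; refine hg.trans ?_
  have hgg : g = (shiftFunctor C (1 : ℤ)).map (v ≫ g₁) := by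
    rw [hg₁']; exact (Functor.map_preimage _ _).symm
  rw [hgg]
  show (-((shiftFunctor C (1 : ℤ)).map u)) ≫ (shiftFunctor C (1 : ℤ)).map (v ≫ g₁) = 0
  rw [Preadditive.neg_comp, ← Functor.map_comp, ← assoc, z12, zero_comp,
    Functor.map_zero, neg_zero]

/-- Postcomposition with the counit of the adjunction `i_A ⊣ R` is bijective on morphisms
from objects of `A`. -/
lemma counit_postcomp_bij {A : Set C} {R : C ⥤ ObjectProperty.FullSubcategory (C := C) (· ∈ A)}
    (adj : ObjectProperty.ι (C := C) (· ∈ A) ⊣ R) (Y : C) {c : C} (hc : c ∈ A) :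
    Function.Bijective
      (fun p : c ⟶ (ObjectProperty.ι (C := C) (· ∈ A)).obj (R.obj Y) =>
        p ≫ adj.counit.app Y) := by
  constructor
  · intro p p' hpp
    have hpp' : p ≫ adj.counit.app Y = p' ≫ adj.counit.app Y := hpp
    have h1 : (adj.homEquiv (⟨c, hc⟩ : ObjectProperty.FullSubcategory (C := C) (· ∈ A)) Y).symm
          ((ObjectProperty.ι (C := C) (· ∈ A)).preimage p) =
        (adj.homEquiv (⟨c, hc⟩ : ObjectProperty.FullSubcategory (C := C) (· ∈ A)) Y).symm
          ((ObjectProperty.ι (C := C) (· ∈ A)).preimage p') := by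
      rw [Adjunction.homEquiv_counit, Adjunction.homEquiv_counit, Functor.map_preimage,
        Functor.map_preimage]
      exact hpp'
    have h2 := (adj.homEquiv (⟨c, hc⟩ : ObjectProperty.FullSubcategory (C := C) (· ∈ A)) Y).symm.injective h1
    have h3 := congrArg (ObjectProperty.ι (C := C) (· ∈ A)).map h2
    rwa [Functor.map_preimage, Functor.map_preimage] at h3
  · intro r
    refine ⟨(ObjectProperty.ι (C := C) (· ∈ A)).map
      (adj.homEquiv (⟨c, hc⟩ : ObjectProperty.FullSubcategory (C := C) (· ∈ A)) Y r), ?_⟩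
    exact (adj.homEquiv (⟨c, hc⟩ : ObjectProperty.FullSubcategory (C := C) (· ∈ A)) Y).symm_apply_apply r

/-- Precomposition with the unit of the adjunction `L ⊣ i_A` is bijective on morphisms
to objects of `A`. -/
lemma unit_precomp_bij {A : Set C} {L : C ⥤ ObjectProperty.FullSubcategory (C := C) (· ∈ A)}
    (adj : L ⊣ ObjectProperty.ι (C := C) (· ∈ A)) (Y : C) {c : C} (hc : c ∈ A) :
    Function.Bijective
      (fun p : (ObjectProperty.ι (C := C) (· ∈ A)).obj (L.obj Y) ⟶ c =>
        adj.unit.app Y ≫ p) := by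
  constructor
  · intro p p' hpp
    have hpp' : adj.unit.app Y ≫ p = adj.unit.app Y ≫ p' := hpp
    have h1 : (adj.homEquiv Y (⟨c, hc⟩ : ObjectProperty.FullSubcategory (C := C) (· ∈ A)))
          ((ObjectProperty.ι (C := C) (· ∈ A)).preimage p) =
        (adj.homEquiv Y (⟨c, hc⟩ : ObjectProperty.FullSubcategory (C := C) (· ∈ A)))
          ((ObjectProperty.ι (C := C) (· ∈ A)).preimage p') := by
      rw [Adjunction.homEquiv_unit, Adjunction.homEquiv_unit, Functor.map_preimage,
        Functor.map_preimage]
      exact hpp'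
    have h2 := (adj.homEquiv Y (⟨c, hc⟩ : ObjectProperty.FullSubcategory (C := C) (· ∈ A))).injective h1
    have h3 := congrArg (ObjectProperty.ι (C := C) (· ∈ A)).map h2
    rwa [Functor.map_preimage, Functor.map_preimage] at h3
  · intro r
    refine ⟨(ObjectProperty.ι (C := C) (· ∈ A)).map
      ((adj.homEquiv Y (⟨c, hc⟩ : ObjectProperty.FullSubcategory (C := C) (· ∈ A))).symm r), ?_⟩
    exact (adj.homEquiv Y (⟨c, hc⟩ : ObjectProperty.FullSubcategory (C := C) (· ∈ A))).apply_symm_apply r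

/-- Existence of the decomposition triangle `i_A i_A^! t ⟶ t ⟶ z` with `z ∈ A^⊥`. -/
lemma exists_triangle_right {A : Set C} (hsub : IsTriangSub A)
    (hadm : (ObjectProperty.ι (C := C) (· ∈ A)).IsLeftAdjoint) (t : C) :
    ∃ (x z : C) (u : x ⟶ t) (v : t ⟶ z) (w : z ⟶ x⟦(1 : ℤ)⟧),
      (Triangle.mk u v w ∈ distTriang C) ∧ x ∈ A ∧ z ∈ rightOrth A := by
  obtain ⟨R, ⟨adj⟩⟩ := hadm.exists_rightAdjoint
  obtain ⟨z, v, w, hd⟩ := distinguished_cocone_triangle (adj.counit.app t)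
  exact ⟨_, z, adj.counit.app t, v, w, hd, (R.obj t).property,
    cone_mem_rightOrth hsub _ v w hd (fun c hc => counit_postcomp_bij adj t hc)⟩

/-- Existence of the decomposition triangle `x ⟶ t ⟶ i_A i_A^* t` with `x ∈ ^⊥A`. -/
lemma exists_triangle_left {A : Set C} (hsub : IsTriangSub A)
    (hadm : (ObjectProperty.ι (C := C) (· ∈ A)).IsRightAdjoint) (t : C) :
    ∃ (x z : C) (u : x ⟶ t) (v : t ⟶ z) (w : z ⟶ x⟦(1 : ℤ)⟧),
      (Triangle.mk u v w ∈ distTriang C) ∧ x ∈ leftOrth A ∧ z ∈ A := by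
  obtain ⟨L, ⟨adj⟩⟩ := hadm.exists_leftAdjoint
  obtain ⟨x, u, w, hd⟩ := distinguished_cocone_triangle₁ (adj.unit.app t)
  exact ⟨x, _, u, adj.unit.app t, w, hd,
    fiber_mem_leftOrth hsub u _ w hd (fun c hc => unit_precomp_bij adj t hc),
    (L.obj t).property⟩

/-- Packaging a two-step filtration from a single distinguished triangle. -/
lemma hasFiltration_of_triangle {P Q : Set C} {x t z : C}
    (u : x ⟶ t) (v : t ⟶ z) (w : z ⟶ x⟦(1 : ℤ)⟧)
    (hd : Triangle.mk u v w ∈ distTriang C) (hz : z ∈ P) (hx : x ∈ Q) :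
    HasFiltration ![P, Q] t := by
  refine ⟨![t, x, 0],
    Fin.cons u (Fin.cons (0 : (0 : C) ⟶ x) (fun i => i.elim0)), ?_, rfl, ?_⟩
  · exact isZero_zero C
  · intro j
    match j with
    | ⟨0, _⟩ => exact ⟨z, v, w, hd, hz⟩
    | ⟨1, _⟩ => exact ⟨x, 𝟙 x, 0, contractible_distinguished₁ x, hx⟩

/-- Packaging a semiorthogonal decomposition of length 2. -/
lemma isSOD_mk {P Q : Set C} (hP : IsTriangSub P) (hQ : IsTriangSub Q)
    (horth : HomOrth Q P)
    (hfilt : ∀ t : C, ∃ (x z : C) (u : x ⟶ t) (v : t ⟶ z) (w : z ⟶ x⟦(1 : ℤ)⟧),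
      (Triangle.mk u v w ∈ distTriang C) ∧ x ∈ Q ∧ z ∈ P) :
    IsSOD ![P, Q] := by
  refine ⟨?_, ?_, ?_⟩
  · intro j
    match j with
    | ⟨0, _⟩ => exact hP
    | ⟨1, _⟩ => exact hQ
  · intro l k hlk
    have h0 : (l : ℕ) = 0 := by omega
    have h1 : (k : ℕ) = 1 := by omega
    have hl : l = 0 := Fin.ext (by simp [h0])
    have hk : k = 1 := Fin.ext (by simp [h1])
    subst hl; subst hk
    exact horth
  · intro t
    obtain ⟨x, z, u, v, w, hd, hx, hz⟩ := hfilt t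
    exact hasFiltration_of_triangle u v w hd hz hx

/-- Extracting the decomposition triangle from a two-term SOD. -/
lemma sod_triangle {A B : Set C} (h : IsSOD ![A, B]) (t : C) :
    ∃ (x z : C) (u : x ⟶ t) (v : t ⟶ z) (w : z ⟶ x⟦(1 : ℤ)⟧),
      (Triangle.mk u v w ∈ distTriang C) ∧ x ∈ B ∧ z ∈ A := by
  obtain ⟨F, f, hzero, hF0, htri⟩ := h.filt t
  subst hF0
  obtain ⟨a, g, hmap, hd0, ha⟩ := htri 0
  obtain ⟨b, g', h', hd1, hb⟩ := htri 1
  have hzero' : IsZero ((Triangle.mk (f 1) g' h').obj₁) := hzero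
  have hiso : IsIso g' := (Triangle.isZero₁_iff_isIso₂ _ hd1).1 hzero'
  have hF1 : F 1 ∈ B := by
    have hb' : b ∈ B := by simpa using hb
    exact (h.triangSub 1).iso_mem (asIso g').symm hb'
  refine ⟨F 1, a, f 0, g, hmap, hd0, hF1, by simpa using ha⟩

lemma sod_homOrth {A B : Set C} (h : IsSOD ![A, B]) : HomOrth B A := by
  have := h.semiorth (l := 0) (k := 1) (by decide)
  simpa using this

lemma sod_eq_leftOrth {A B : Set C} (h : IsSOD ![A, B]) : B = leftOrth A := by
  have hBA : HomOrth B A := sod_homOrth h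
  apply Set.eq_of_subset_of_subset
  · intro b hb a ha f
    exact hBA hb ha f
  · intro t ht
    obtain ⟨x, z, u, v, w, hd, hx, hz⟩ := sod_triangle h t
    have hv : v = 0 := ht hz v
    have hzz : IsZero z := by
      rw [IsZero.iff_id_eq_zero]
      obtain ⟨g, hg⟩ := Triangle.yoneda_exact₂ _ (rot_of_distTriang _ hd) (𝟙 z)
        (by exact (comp_id v).trans hv)
      rw [hg]
      have : g = 0 := hBA ((h.triangSub 1).shift_mem 1 hx) hz g
      rw [this, comp_zero]; rfl
    have : IsIso u := (Triangle.isZero₃_iff_isIso₁ _ hd).1 hzz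
    exact (h.triangSub 1).iso_mem (asIso u) hx

lemma sod_eq_rightOrth {A B : Set C} (h : IsSOD ![A, B]) : A = rightOrth B := by
  have hBA : HomOrth B A := sod_homOrth h
  apply Set.eq_of_subset_of_subset
  · intro a ha b hb f
    exact hBA hb ha f
  · intro t ht
    obtain ⟨x, z, u, v, w, hd, hx, hz⟩ := sod_triangle h t
    have hu : u = 0 := ht hx u
    have hzx : IsZero x := by
      have h1 : IsZero (x⟦(1 : ℤ)⟧) := by
        rw [IsZero.iff_id_eq_zero]
        obtain ⟨g, hg⟩ := Triangle.coyoneda_exact₂ _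
          (rot_of_distTriang _ (rot_of_distTriang _ hd)) (𝟙 (x⟦(1 : ℤ)⟧))
          (by
            show 𝟙 _ ≫ (-(shiftFunctor C (1 : ℤ)).map u) = 0
            rw [hu, Functor.map_zero, neg_zero, comp_zero])
        rw [hg]
        have : g = 0 := hBA ((h.triangSub 1).shift_mem 1 hx) hz g
        rw [this, zero_comp]; rfl
      have h2 : IsZero ((x⟦(1 : ℤ)⟧)⟦(-1 : ℤ)⟧) :=
        (shiftFunctor C (-1 : ℤ)).map_isZero h1
      exact IsZero.of_iso h2 ((shiftFunctorCompIsoId C (1 : ℤ) (-1 : ℤ) (by omega)).app x).symm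
    have : IsIso v := (Triangle.isZero₁_iff_isIso₂ _ hd).1 hzx
    have hA0 : z ∈ A := hz
    exact (h.triangSub 0).iso_mem (asIso v).symm (by simpa using hA0)

section SerrePart

variable {k : Type w} [Field k] [CategoryTheory.Linear k C]

lemma serre_mem_leftOrth_iff (SD : SerreData k C) (A : Set C) (X : C) :
    X ∈ leftOrth A ↔ SD.S.functor.obj X ∈ rightOrth A := by
  constructor
  · intro h a ha ψ
    rw [← Module.forall_dual_apply_eq_zero_iff (R := k)]
    intro φ
    obtain ⟨f, rfl⟩ := (SD.pairing_bijective X a).2 φ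
    rw [h ha f, map_zero]
    rfl
  · intro h a ha f
    apply (SD.pairing_bijective X a).1
    rw [map_zero]
    apply LinearMap.ext
    intro ψ
    rw [h ha ψ, map_zero]
    rfl

lemma essImageSet_serre_leftOrth (SD : SerreData k C) (A : Set C) :
    essImageSet SD.S.functor.obj (leftOrth A) = rightOrth A := by
  apply Set.eq_of_subset_of_subset
  · rintro Y ⟨X, hX, ⟨e⟩⟩
    exact rightOrth_iso_mem e ((serre_mem_leftOrth_iff SD A X).1 hX)
  · intro Y hY
    refine ⟨SD.S.inverse.obj Y, ?_, ⟨SD.S.counitIso.app Y⟩⟩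
    rw [serre_mem_leftOrth_iff SD A]
    exact rightOrth_iso_mem (SD.S.counitIso.app Y).symm hY

lemma essImageSet_serre_inv_rightOrth (SD : SerreData k C) (A : Set C) :
    essImageSet SD.S.inverse.obj (rightOrth A) = leftOrth A := by
  apply Set.eq_of_subset_of_subset
  · rintro X ⟨Y, hY, ⟨e⟩⟩
    refine leftOrth_iso_mem e ?_
    rw [serre_mem_leftOrth_iff SD A]
    exact rightOrth_iso_mem (SD.S.counitIso.app Y).symm hY
  · intro X hX
    exact ⟨SD.S.functor.obj X, (serre_mem_leftOrth_iff SD A X).1 hX,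
      ⟨(SD.S.unitIso.app X).symm⟩⟩

/-- Serre duality converts bijectivity of postcomposition with `S(u)` into bijectivity of
precomposition with `u`. -/
lemma serre_precomp_bij (SD : SerreData k C) {A : Set C} {x t : C} {u : x ⟶ t}
    (hu : ∀ ⦃c : C⦄, c ∈ A →
      Function.Bijective (fun ψ : c ⟶ SD.S.functor.obj x => ψ ≫ SD.S.functor.map u))
    ⦃c : C⦄ (hc : c ∈ A) :
    Function.Bijective (fun φ : t ⟶ c => u ≫ φ) := by
  constructor
  · intro φ φ' hφ
    have hφ' : u ≫ φ = u ≫ φ' := hφ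
    apply (SD.pairing_bijective t c).1
    apply LinearMap.ext
    intro χ
    obtain ⟨ψ, rfl⟩ := (hu hc).2 χ
    show SD.pairing t c φ (ψ ≫ SD.S.functor.map u)
      = SD.pairing t c φ' (ψ ≫ SD.S.functor.map u)
    rw [← SD.pairing_nat_left u φ ψ, ← SD.pairing_nat_left u φ' ψ, hφ']
  · intro r
    set ρ := CategoryTheory.Linear.rightComp k c (SD.S.functor.map u) with hρdef
    have hρ : Function.Bijective ρ := hu hc
    set eρ := LinearEquiv.ofBijective ρ hρ with heρ
    obtain ⟨φ, hφ⟩ := (SD.pairing_bijective t c).2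
      ((SD.pairing x c r).comp (eρ.symm : (c ⟶ SD.S.functor.obj t) →ₗ[k] _))
    refine ⟨φ, ?_⟩
    show u ≫ φ = r
    apply (SD.pairing_bijective x c).1
    apply LinearMap.ext
    intro ψ
    rw [SD.pairing_nat_left u φ ψ, hφ]
    have h1 : ψ ≫ SD.S.functor.map u = eρ ψ := rfl
    rw [h1]
    show (SD.pairing x c r) (eρ.symm (eρ ψ)) = _
    rw [LinearEquiv.symm_apply_apply]

end SerrePart

end Auxiliary

section Statements

variable [HasZeroObject C] [Preadditive C] [HasShift C ℤ]
  [∀ n : ℤ, (shiftFunctor C n).Additive] [Pretriangulated C]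

/-- let `S` be a Serre functor on the `k`-linear triangulated category `T`
with finite-dimensional Hom spaces, and `A` an admissible subcategory.  Then
`S(^⊥A) = A^⊥` and `S⁻¹(A^⊥) = ^⊥A`; in particular, for any semiorthogonal decomposition
`T = ⟨A, B⟩` one has `B = ^⊥A`, `A = B^⊥`, and semiorthogonal decompositions
`T = ⟨S(B), A⟩` and `T = ⟨B, S⁻¹(A)⟩`. -/
theorem statement11 (k : Type w) [Field k] [CategoryTheory.Linear k C]
    (SD : SerreData k C) (hfd : ∀ X Y : C, FiniteDimensional k (X ⟶ Y))
    (A : Set C) (hA : IsAdmissible A) :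
    essImageSet SD.S.functor.obj (leftOrth A) = rightOrth A ∧
    essImageSet SD.S.inverse.obj (rightOrth A) = leftOrth A ∧
    ∀ B : Set C, IsSOD ![A, B] →
      B = leftOrth A ∧ A = rightOrth B ∧
        IsSOD ![essImageSet SD.S.functor.obj B, A] ∧
        IsSOD ![B, essImageSet SD.S.inverse.obj A] := by
  have hsub := hA.1
  refine ⟨essImageSet_serre_leftOrth SD A, essImageSet_serre_inv_rightOrth SD A, ?_⟩
  intro B hSOD
  have hBsub : IsTriangSub B := by simpa using hSOD.triangSub 1
  have hBl : B = leftOrth A := sod_eq_leftOrth hSOD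
  have hAr : A = rightOrth B := sod_eq_rightOrth hSOD
  refine ⟨hBl, hAr, ?_, ?_⟩
  · -- `T = ⟨S(B), A⟩`
    have hEq : essImageSet SD.S.functor.obj B = rightOrth A := by
      rw [hBl]; exact essImageSet_serre_leftOrth SD A
    rw [hEq]
    refine isSOD_mk (triangSub_rightOrth hsub) hsub ?_ ?_
    · intro X hX Y hY f
      exact hY hX f
    · exact exists_triangle_right hsub hA.2.2
  · -- `T = ⟨B, S⁻¹(A)⟩`
    have hEq : essImageSet SD.S.inverse.obj A = leftOrth B := by
      rw [hAr]; exact essImageSet_serre_inv_rightOrth SD B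
    rw [hEq]
    refine isSOD_mk hBsub (triangSub_leftOrth hBsub) ?_ ?_
    · intro X hX Y hY f
      exact hX hY f
    · intro t
      obtain ⟨Radj, ⟨adj⟩⟩ := hA.2.2.exists_rightAdjoint
      set i := ObjectProperty.ι (C := C) (· ∈ A) with hi
      set St := SD.S.functor.obj t with hSt
      set a := i.obj (Radj.obj St) with ha
      have haA : a ∈ A := (Radj.obj St).property
      set ε := adj.counit.app St with hε
      set x := SD.S.inverse.obj a with hx
      set u : x ⟶ t := SD.S.functor.preimage (SD.S.counitIso.hom.app a ≫ ε) with hu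
      have hmapu : SD.S.functor.map u = SD.S.counitIso.hom.app a ≫ ε :=
        SD.S.functor.map_preimage _
      obtain ⟨z, v, w, hd⟩ := distinguished_cocone_triangle u
      have hbiju : ∀ ⦃c : C⦄, c ∈ A → Function.Bijective (fun φ : t ⟶ c => u ≫ φ) := by
        apply serre_precomp_bij SD
        intro c hc
        have hb1 : Function.Bijective
            (fun ψ : c ⟶ SD.S.functor.obj x => ψ ≫ SD.S.counitIso.hom.app a) := by
          constructor
          · intro ψ ψ' hh
            have hh' : ψ ≫ SD.S.counitIso.hom.app a = ψ' ≫ SD.S.counitIso.hom.app a := hh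
            exact (cancel_mono _).1 hh'
          · intro χ
            refine ⟨χ ≫ SD.S.counitIso.inv.app a, ?_⟩
            show (χ ≫ SD.S.counitIso.inv.app a) ≫ SD.S.counitIso.hom.app a = χ
            simp
        have hb2 : Function.Bijective (fun χ : c ⟶ a => χ ≫ ε) :=
          counit_postcomp_bij adj St hc
        have hcomp : (fun ψ : c ⟶ SD.S.functor.obj x => ψ ≫ SD.S.functor.map u) =
            (fun χ : c ⟶ a => χ ≫ ε) ∘
              (fun ψ : c ⟶ SD.S.functor.obj x => ψ ≫ SD.S.counitIso.hom.app a) := by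
          funext ψ
          show ψ ≫ SD.S.functor.map u = (ψ ≫ SD.S.counitIso.hom.app a) ≫ ε
          rw [hmapu, assoc]
        rw [hcomp]
        exact hb2.comp hb1
      have hzB : z ∈ B := by
        rw [hBl]
        exact cone_mem_leftOrth hsub u v w hd hbiju
      have hxl : x ∈ leftOrth B := by
        have hmem : x ∈ essImageSet SD.S.inverse.obj (rightOrth B) :=
          ⟨a, hAr ▸ haA, ⟨Iso.refl x⟩⟩
        rwa [essImageSet_serre_inv_rightOrth SD B] at hmem
      exact ⟨x, z, u, v, w, hd, hxl, hzB⟩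

end Statements
end HPD
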